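/- For every integer t ≥ 2, t divides binomial(t(t+1), t+1), and there exists a k-server PIR array code with m_1 = t rows, s = t(t+1) information bits, m_2 = binomial(t(t+1), t) + binomial(t(t+1), t+1)/t columns, and k = binomial(t(t+1), t). (The construction stores in the first binomial(t(t+1),t) columns all t-element subsets of the s information bits, and in the remaining columns all binomial(t(t+1),t+1) sums of t+1 information bits, t sums per column, with every bit appearing in exactly one sum per column.) -/

import Mathlib

/-- A binary `[m₁ × m₂, s]` `k`-server PIR array code: an injective `F_2`-linear
encoding `E` of `s` bits into `m₁ × m₂` arrays such that for every information
bit `i` there are `k` pairwise disjoint sets of columns, each supporting a linear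
functional that recovers `u_i` from the encoding of `u`. -/
def IsPIRArrayCode (m₁ m₂ s k : ℕ)
    (E : (Fin s → ZMod 2) →ₗ[ZMod 2] Matrix (Fin m₁) (Fin m₂) (ZMod 2)) : Prop :=
  Function.Injective E ∧
  ∀ i : Fin s, ∃ R : Fin k → Finset (Fin m₂),
    (∀ j j' : Fin k, j ≠ j' → Disjoint (R j) (R j')) ∧
    ∀ j : Fin k, ∃ f : Matrix (Fin m₁) (Fin m₂) (ZMod 2) →ₗ[ZMod 2] ZMod 2,
      (∀ M M' : Matrix (Fin m₁) (Fin m₂) (ZMod 2),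
        (∀ r : Fin m₁, ∀ c ∈ R j, M r c = M' r c) → f M = f M') ∧
      ∀ u : Fin s → ZMod 2, f (E u) = u i

open Finset

namespace PIRAux

/-- target multiplicity of a part `S` when `m` elements have been distributed -/
def cnt (n r m : ℕ) (S : Finset (Fin n)) : ℕ :=
  if S.card ≤ r then (n - m).choose (r - S.card) else 0

def Inv (n r : ℕ) (D : Finset (Fin n))
    (cl : Fin ((n-1).choose (r-1)) → Multiset (Finset (Fin n))) : Prop :=
  (∀ j, Multiset.card (cl j) = n / r) ∧
  (∀ j, ((cl j).map Finset.val).sum = D.val) ∧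
  (∀ S : Finset (Fin n), S ⊆ D → (∑ j, (cl j).count S) = cnt n r D.card S)

variable {n r : ℕ}

lemma card_multiset_sum (l : Multiset (Multiset (Fin n))) :
    Multiset.card l.sum = (l.map Multiset.card).sum := by
  induction l using Multiset.induction with
  | empty => simp
  | cons a s ih => simp [ih]

lemma subset_of_mem {D : Finset (Fin n)} {cl : Fin ((n-1).choose (r-1)) → Multiset (Finset (Fin n))}
    (h : Inv n r D cl) {j} {S : Finset (Fin n)} (hS : S ∈ cl j) : S ⊆ D := by
  rw [← Finset.val_le_iff, ← h.2.1 j]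
  have : cl j = S ::ₘ (cl j).erase S := (Multiset.cons_erase hS).symm
  rw [this, Multiset.map_cons, Multiset.sum_cons]
  exact Multiset.le_add_right _ _

lemma count_pos_of_mem {D : Finset (Fin n)}
    {cl : Fin ((n-1).choose (r-1)) → Multiset (Finset (Fin n))}
    (h : Inv n r D cl) {j} {S : Finset (Fin n)} (hS : S ∈ cl j) :
    0 < cnt n r D.card S := by
  have h1 : 0 < (cl j).count S := Multiset.count_pos.2 hS
  have h2 : (cl j).count S ≤ ∑ j', (cl j').count S :=
    Finset.single_le_sum (f := fun j' => (cl j').count S) (fun _ _ => Nat.zero_le _) (mem_univ j)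
  have := h.2.2 S (subset_of_mem h hS)
  omega

lemma card_le_r_of_mem {D : Finset (Fin n)}
    {cl : Fin ((n-1).choose (r-1)) → Multiset (Finset (Fin n))}
    (h : Inv n r D cl) {j} {S : Finset (Fin n)} (hS : S ∈ cl j) : S.card ≤ r := by
  have := count_pos_of_mem h hS
  by_contra hc
  rw [cnt, if_neg hc] at this
  exact absurd this (lt_irrefl 0)

/-- within one class, the total slack `r - |S|` equals `n - |D|`. -/
lemma slack_sum (hr : 0 < r) (hdvd : r ∣ n) {D : Finset (Fin n)}
    {cl : Fin ((n-1).choose (r-1)) → Multiset (Finset (Fin n))}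
    (h : Inv n r D cl) (j) :
    (((cl j).map (fun S => r - S.card)).sum) = n - D.card := by
  have hcards : ((cl j).map (fun S => S.card)).sum = D.card := by
    have := congrArg Multiset.card (h.2.1 j)
    rw [card_multiset_sum, Multiset.map_map] at this
    exact this
  have hsum : (((cl j).map (fun S => r - S.card)).sum) + ((cl j).map (fun S => S.card)).sum
      = Multiset.card (cl j) * r := by
    rw [← Multiset.sum_map_add]
    have : ∀ S ∈ cl j, (r - S.card) + S.card = r := fun S hS =>
      Nat.sub_add_cancel (card_le_r_of_mem h hS)
    rw [Multiset.map_congr rfl this]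
    simp [Multiset.map_const', mul_comm]
  have hcard : Multiset.card (cl j) * r = n := by
    rw [h.1 j, Nat.div_mul_cancel hdvd]
  have hDn : D.card ≤ n := by
    simpa using Finset.card_le_card (Finset.subset_univ D)
  omega


def dlt (n r m : ℕ) (S : Finset (Fin n)) : ℕ :=
  if S.card < r then (n - m - 1).choose (r - 1 - S.card) else 0

variable {n r : ℕ}

lemma choose_mul_eq {M k : ℕ} (hM : 0 < M) (hk : 0 < k) :
    k * M.choose k = M * (M-1).choose (k-1) := by
  obtain ⟨M', rfl⟩ := Nat.exists_eq_succ_of_ne_zero hM.ne'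
  obtain ⟨k', rfl⟩ := Nat.exists_eq_succ_of_ne_zero hk.ne'
  have h := Nat.add_one_mul_choose_eq M' k'
  simp only [Nat.succ_eq_add_one, Nat.add_sub_cancel]
  rw [mul_comm]
  exact h.symm

lemma slack_cnt_eq_dlt (m : ℕ) (hm : m < n) (S : Finset (Fin n)) (hSr : S.card ≤ r) :
    (r - S.card) * cnt n r m S = (n - m) * dlt n r m S := by
  rcases eq_or_lt_of_le hSr with hE | hlt
  · simp [cnt, dlt, hE, Nat.sub_self]
  · rw [cnt, if_pos hSr, dlt, if_pos hlt]
    have h1 : (0:ℕ) < n - m := by omega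
    have h2 : (0:ℕ) < r - S.card := by omega
    have h3 := choose_mul_eq (M := n - m) (k := r - S.card) h1 h2
    rw [h3]
    congr 2 <;> omega

lemma dlt_total (hr : 0 < r) (D : Finset (Fin n)) (hm : D.card < n) :
    ∑ S ∈ D.powerset, dlt n r D.card S = (n-1).choose (r-1) := by
  classical
  set m := D.card with hD
  have hvdm : (n-1).choose (r-1)
      = ∑ i ∈ range r, m.choose i * (n - m - 1).choose (r - 1 - i) := by
    have h := Nat.add_choose_eq m (n - m - 1) (r-1)
    rw [Finset.Nat.sum_antidiagonal_eq_sum_range_succ_mk] at h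
    have hnm : m + (n - m - 1) = n - 1 := by omega
    have hrs : (r-1).succ = r := by omega
    rw [hnm, hrs] at h
    simpa using h
  have hps : ∑ S ∈ D.powerset, dlt n r m S
      = ∑ k ∈ range (m+1), m.choose k * (if k < r then (n - m - 1).choose (r - 1 - k) else 0) := by
    rw [Finset.powerset_card_biUnion, Finset.sum_biUnion]
    · refine Finset.sum_congr rfl fun k _ => ?_
      have h := Finset.sum_powersetCard k D
        (fun c => if c < r then (n - m - 1).choose (r - 1 - c) else 0)
      calc ∑ S ∈ powersetCard k D, dlt n r m S
          = ∑ S ∈ powersetCard k D,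
            (fun c => if c < r then (n - m - 1).choose (r - 1 - c) else 0) S.card :=
            Finset.sum_congr rfl fun S _ => rfl
        _ = m.choose k * (if k < r then (n - m - 1).choose (r - 1 - k) else 0) := by
            rw [h, ← hD, smul_eq_mul]
    · intro x hx y hy hxy
      simp only [Finset.disjoint_left]
      intro A hA hA'
      simp only [Finset.mem_coe, Finset.mem_powersetCard] at hA hA'
      exact hxy (by rw [← hA.2, hA'.2])
  set R := max r (m+1) with hR
  set G : ℕ → ℕ := fun k => m.choose k * (if k < r then (n - m - 1).choose (r - 1 - k) else 0)
    with hG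
  have eA : ∑ k ∈ range (m+1), G k = ∑ k ∈ range R, G k := by
    refine Finset.sum_subset (Finset.range_subset_range.2 (le_max_right _ _)) fun k _ hk => ?_
    rw [Finset.mem_range, not_lt] at hk
    simp only [hG, Nat.choose_eq_zero_of_lt (by omega : m < k), zero_mul]
  have eB : ∑ i ∈ range r, m.choose i * (n - m - 1).choose (r - 1 - i) = ∑ k ∈ range R, G k := by
    rw [show ∑ i ∈ range r, m.choose i * (n - m - 1).choose (r - 1 - i) = ∑ i ∈ range r, G i from
      Finset.sum_congr rfl fun i hi => by
        simp only [hG, if_pos (Finset.mem_range.1 hi)]]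
    refine Finset.sum_subset (Finset.range_subset_range.2 (le_max_left _ _)) fun k _ hk => ?_
    rw [Finset.mem_range, not_lt] at hk
    simp only [hG, if_neg (by omega : ¬ k < r), mul_zero]
  rw [hps, hvdm, eA, eB]

lemma slot_card (δ : Finset (Fin n) → ℕ) (𝒮 : Finset (Finset (Fin n))) :
    (𝒮.biUnion (fun S => (range (δ S)).image fun i => (S, i))).card = ∑ S ∈ 𝒮, δ S := by
  classical
  rw [Finset.card_biUnion]
  · refine Finset.sum_congr rfl fun S _ => ?_
    rw [Finset.card_image_of_injective _ (fun i i' hii' => (Prod.mk.injEq _ _ _ _ ▸ hii').2),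
      Finset.card_range]
  · intro x _ y _ hxy
    simp only [Finset.disjoint_left]
    intro p hp hp'
    simp only [Finset.mem_image, Finset.mem_range] at hp hp'
    obtain ⟨i, _, rfl⟩ := hp
    obtain ⟨i', _, h'⟩ := hp'
    exact hxy ((Prod.mk.injEq _ _ _ _ ▸ h').1.symm)

lemma exists_sdr (hr : 0 < r) (hdvd : r ∣ n) {D : Finset (Fin n)} (hmn : D.card < n)
    {cl : Fin ((n-1).choose (r-1)) → Multiset (Finset (Fin n))} (h : Inv n r D cl) :
    ∃ σ : Fin ((n-1).choose (r-1)) → Finset (Fin n),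
      (∀ j, σ j ∈ cl j) ∧ (∀ j, (σ j).card < r) ∧
      (∀ S ∈ D.powerset,
        (univ.filter fun j => σ j = S).card = dlt n r D.card S) := by
  classical
  set m := D.card with hm
  set δ : Finset (Fin n) → ℕ := dlt n r m with hδ
  set g : Finset (Fin n) → Finset (Finset (Fin n) × ℕ) :=
    fun S => (range (δ S)).image fun i => (S, i) with hg
  set ts : Fin ((n-1).choose (r-1)) → Finset (Finset (Fin n) × ℕ) := fun j =>
    (cl j).toFinset.biUnion g with hts
  have hall : ∀ W : Finset (Fin ((n-1).choose (r-1))), W.card ≤ (W.biUnion ts).card := by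
    intro W
    have hBU : W.biUnion ts = (W.biUnion fun j => (cl j).toFinset).biUnion g :=
      (Finset.biUnion_biUnion W (fun j => (cl j).toFinset) g).symm
    set 𝒮 := W.biUnion fun j => (cl j).toFinset with h𝒮
    have hSsub : ∀ S ∈ 𝒮, S ⊆ D ∧ S.card ≤ r := by
      intro S hS
      rw [h𝒮, Finset.mem_biUnion] at hS
      obtain ⟨j, _, hSj⟩ := hS
      rw [Multiset.mem_toFinset] at hSj
      exact ⟨subset_of_mem h hSj, card_le_r_of_mem h hSj⟩
    have hcard : (W.biUnion ts).card = ∑ S ∈ 𝒮, δ S := by rw [hBU, slot_card]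
    have key : W.card * (n - m) ≤ (∑ S ∈ 𝒮, δ S) * (n - m) := by
      calc W.card * (n - m) = ∑ _j ∈ W, (n - m) := by rw [Finset.sum_const, smul_eq_mul]
        _ = ∑ j ∈ W, ((cl j).map (fun S => r - S.card)).sum :=
          Finset.sum_congr rfl fun j _ => (slack_sum hr hdvd h j).symm
        _ = ∑ j ∈ W, ∑ S ∈ (cl j).toFinset, (cl j).count S * (r - S.card) := by
          refine Finset.sum_congr rfl fun j _ => ?_
          rw [Finset.sum_multiset_map_count]
          simp [smul_eq_mul]
        _ = ∑ j ∈ W, ∑ S ∈ 𝒮, (cl j).count S * (r - S.card) := by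
          refine Finset.sum_congr rfl fun j hj => ?_
          refine Finset.sum_subset (Finset.subset_biUnion_of_mem (fun j => (cl j).toFinset) hj) fun S _ hS => ?_
          rw [Multiset.count_eq_zero.2 (fun hc => hS (Multiset.mem_toFinset.2 hc)), zero_mul]
        _ = ∑ S ∈ 𝒮, (∑ j ∈ W, (cl j).count S) * (r - S.card) := by
          rw [Finset.sum_comm]
          exact Finset.sum_congr rfl fun S _ => (Finset.sum_mul _ _ _).symm
        _ ≤ ∑ S ∈ 𝒮, (∑ j, (cl j).count S) * (r - S.card) := by
          refine Finset.sum_le_sum fun S _ => Nat.mul_le_mul_right _ ?_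
          exact Finset.sum_le_sum_of_subset (Finset.subset_univ W)
        _ = ∑ S ∈ 𝒮, (n - m) * δ S := by
          refine Finset.sum_congr rfl fun S hS => ?_
          rw [h.2.2 S (hSsub S hS).1, mul_comm]
          exact slack_cnt_eq_dlt m hmn S (hSsub S hS).2
        _ = (∑ S ∈ 𝒮, δ S) * (n - m) := by rw [← Finset.mul_sum, mul_comm]
    rw [hcard]
    exact Nat.le_of_mul_le_mul_right key (by omega)
  obtain ⟨F, hFinj, hFmem⟩ := (Finset.all_card_le_biUnion_card_iff_exists_injective ts).1 hall
  have hkey : ∀ j, (F j).1 ∈ cl j ∧ (F j).2 < δ ((F j).1) := by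
    intro j
    have := hFmem j
    rw [hts, Finset.mem_biUnion] at this
    obtain ⟨S, hS, hmem⟩ := this
    rw [hg, Finset.mem_image] at hmem
    obtain ⟨i, hi, hEq⟩ := hmem
    rw [← hEq]
    exact ⟨Multiset.mem_toFinset.1 hS, by simpa using Finset.mem_range.1 hi⟩
  refine ⟨fun j => (F j).1, fun j => (hkey j).1, ?_, ?_⟩
  · intro j
    by_contra hc
    have := (hkey j).2
    rw [hδ, dlt, if_neg hc] at this
    omega
  · intro S hS
    have hcle : ∀ T ∈ D.powerset,
        (univ.filter fun j => (F j).1 = T).card ≤ δ T := by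
      intro T _
      refine le_trans (Finset.card_le_card_of_injOn (fun j => (F j).2)
        (t := range (δ T)) ?_ ?_) (le_of_eq (Finset.card_range _))
      · intro j hj
        rw [Finset.mem_coe, Finset.mem_filter] at hj
        rw [Finset.mem_coe, Finset.mem_range, ← hj.2]
        exact (hkey j).2
      · intro j hj j' hj' hjj'
        simp only [Finset.coe_filter, Set.mem_setOf_eq] at hj hj'
        exact hFinj (Prod.ext (hj.2.trans hj'.2.symm) hjj')
    have htot : ∑ T ∈ D.powerset, (univ.filter fun j => (F j).1 = T).card
        = (n-1).choose (r-1) := by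
      rw [← Finset.card_eq_sum_card_fiberwise
        (f := fun j => (F j).1) (s := univ) (t := D.powerset) ?_]
      · simp
      · intro j _
        rw [Finset.mem_coe, Finset.mem_powerset]
        exact subset_of_mem h (hkey j).1
    have hdtot : ∑ T ∈ D.powerset, δ T = (n-1).choose (r-1) := dlt_total hr D hmn
    have := (Finset.sum_eq_sum_iff_of_le hcle).1 (htot.trans hdtot.symm)
    exact this S hS

lemma cnt_pascal (hmn : m < n) (S : Finset (Fin n)) :
    cnt n r m S = cnt n r (m+1) S + dlt n r m S := by
  have e0 : n - (m+1) = n - m - 1 := by omega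
  rw [cnt, cnt, dlt, e0]
  by_cases h1 : S.card ≤ r
  · rw [if_pos h1, if_pos h1]
    rcases eq_or_lt_of_le h1 with hE | hlt
    · rw [if_neg (by omega)]
      have : r - S.card = 0 := by omega
      simp [this]
    · rw [if_pos hlt]
      set u := n - m - 1 with hu
      set v := r - 1 - S.card with hv
      have e1 : n - m = u + 1 := by omega
      have e2 : r - S.card = v + 1 := by omega
      rw [e1, e2]
      have hcs : (u+1).choose (v+1) = u.choose v + u.choose (v+1) := Nat.choose_succ_succ u v
      omega
  · rw [if_neg h1, if_neg h1, if_neg (by omega)]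

lemma inv_step (hr : 0 < r) (hdvd : r ∣ n) {D : Finset (Fin n)} {a : Fin n} (ha : a ∉ D)
    {cl : Fin ((n-1).choose (r-1)) → Multiset (Finset (Fin n))} (h : Inv n r D cl) :
    ∃ cl', Inv n r (insert a D) cl' := by
  classical
  set m := D.card with hm
  have hmn : m < n := by
    have h1 : D ≠ univ := fun hDu => ha (hDu ▸ mem_univ a)
    have := Finset.card_lt_card ((Finset.ssubset_univ_iff).2 h1)
    simpa [hm] using this
  obtain ⟨σ, hσmem, hσcard, hσcnt⟩ := exists_sdr hr hdvd hmn h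
  simp only [← hm] at hσcnt
  have hσsub : ∀ j, σ j ⊆ D := fun j => subset_of_mem h (hσmem j)
  have haσ : ∀ j, a ∉ σ j := fun j hc => ha (hσsub j hc)
  refine ⟨fun j => insert a (σ j) ::ₘ (cl j).erase (σ j), ?_, ?_, ?_⟩
  · intro j
    have h1 : Multiset.card ((cl j).erase (σ j)) = Multiset.card (cl j) - 1 :=
      Multiset.card_erase_of_mem (hσmem j)
    have h2 : 0 < Multiset.card (cl j) := Multiset.card_pos_iff_exists_mem.2 ⟨σ j, hσmem j⟩
    rw [Multiset.card_cons, h1, ← h.1 j]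
    omega
  · intro j
    have hsplit : cl j = σ j ::ₘ (cl j).erase (σ j) := (Multiset.cons_erase (hσmem j)).symm
    have hold := h.2.1 j
    rw [hsplit, Multiset.map_cons, Multiset.sum_cons] at hold
    rw [Multiset.map_cons, Multiset.sum_cons, Finset.insert_val_of_notMem (haσ j),
      Finset.insert_val_of_notMem ha, ← hold, Multiset.cons_add]
  · intro S hS
    show (∑ j, Multiset.count S (insert a (σ j) ::ₘ (cl j).erase (σ j)))
      = cnt n r (insert a D).card S
    rw [Finset.card_insert_of_notMem ha, ← hm]
    by_cases haS : a ∈ S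
    · -- new parts containing `a`
      set S₀ := S.erase a with hS₀
      have hS₀D : S₀ ⊆ D := by
        intro x hx
        rw [hS₀, Finset.mem_erase] at hx
        rcases Finset.mem_insert.1 (hS hx.2) with h1 | h1
        · exact absurd h1 hx.1
        · exact h1
      have hScard : S.card = S₀.card + 1 := by
        rw [hS₀, Finset.card_erase_of_mem haS]
        have : 0 < S.card := Finset.card_pos.2 ⟨a, haS⟩
        omega
      have hper : ∀ j, Multiset.count S (insert a (σ j) ::ₘ (cl j).erase (σ j))
          = if σ j = S₀ then 1 else 0 := by
        intro j
        have hnot : S ∉ cl j := fun hc => ha (subset_of_mem h hc haS)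
        have hz : Multiset.count S ((cl j).erase (σ j)) = 0 := by
          have h1 : Multiset.count S ((cl j).erase (σ j)) ≤ Multiset.count S (cl j) :=
            Multiset.count_le_of_le S (Multiset.erase_le _ _)
          rw [Multiset.count_eq_zero.2 hnot] at h1
          omega
        rw [Multiset.count_cons, hz, zero_add]
        congr 1
        rw [eq_iff_iff]
        constructor
        · intro hEq
          rw [hS₀, hEq, Finset.erase_insert (haσ j)]
        · intro hEq
          rw [hEq, hS₀, Finset.insert_erase haS]
      have hsum : (∑ j, Multiset.count S (insert a (σ j) ::ₘ (cl j).erase (σ j)))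
          = (univ.filter fun j => σ j = S₀).card := by
        rw [Finset.sum_congr rfl fun j _ => hper j, Finset.card_filter]
      rw [hsum, hσcnt S₀ (Finset.mem_powerset.2 hS₀D)]
      rw [dlt, cnt]
      by_cases hlt : S₀.card < r
      · rw [if_pos hlt, if_pos (by omega : S.card ≤ r)]
        congr 1
        omega
      · rw [if_neg hlt, if_neg (by omega : ¬ S.card ≤ r)]
    · -- old parts
      have hSD : S ⊆ D := by
        intro x hx
        rcases Finset.mem_insert.1 (hS hx) with h1 | h1
        · exact absurd (h1 ▸ hx) haS
        · exact h1
      have hper : ∀ j, Multiset.count S (insert a (σ j) ::ₘ (cl j).erase (σ j))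
          + (if σ j = S then 1 else 0) = Multiset.count S (cl j) := by
        intro j
        have hne : S ≠ insert a (σ j) := fun hEq => haS (hEq ▸ Finset.mem_insert_self a (σ j))
        rw [Multiset.count_cons, if_neg hne, add_zero]
        by_cases hEq : σ j = S
        · rw [if_pos hEq, ← hEq, Multiset.count_erase_self]
          have : 0 < Multiset.count (σ j) (cl j) := Multiset.count_pos.2 (hσmem j)
          omega
        · rw [if_neg hEq, Multiset.count_erase_of_ne (fun hc => hEq hc.symm)]
          omega
      have hsum : (∑ j, Multiset.count S (insert a (σ j) ::ₘ (cl j).erase (σ j)))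
          + (univ.filter fun j => σ j = S).card = ∑ j, Multiset.count S (cl j) := by
        rw [Finset.card_filter, ← Finset.sum_add_distrib]
        exact Finset.sum_congr rfl fun j _ => hper j
      have hcS : (univ.filter fun j => σ j = S).card = dlt n r m S :=
        hσcnt S (Finset.mem_powerset.2 hSD)
      have hold : ∑ j, Multiset.count S (cl j) = cnt n r m S := h.2.2 S hSD
      have hpas := cnt_pascal (n := n) (r := r) (m := m) hmn S
      omega
lemma inv_base (hr : 0 < r) (hn : 0 < n) (hdvd : r ∣ n) :
    Inv n r ∅ (fun _ => Multiset.replicate (n / r) (∅ : Finset (Fin n))) := by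
  classical
  refine ⟨fun j => Multiset.card_replicate _ _, fun j => by simp, ?_⟩
  intro S hS
  rw [Finset.subset_empty] at hS
  subst hS
  have hcount : ∀ j : Fin ((n-1).choose (r-1)),
      Multiset.count (∅ : Finset (Fin n)) (Multiset.replicate (n/r) (∅ : Finset (Fin n)))
        = n / r := by
    simp [Multiset.count_replicate]
  rw [Finset.sum_congr rfl (fun j _ => hcount j), Finset.sum_const, smul_eq_mul,
    Finset.card_univ, Fintype.card_fin]
  rw [cnt, Finset.card_empty, if_pos (Nat.zero_le r), Nat.sub_zero, Nat.sub_zero]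
  have h1 : r * n.choose r = n * (n-1).choose (r-1) := choose_mul_eq hn hr
  have h3 : r * ((n/r) * (n-1).choose (r-1)) = n * (n-1).choose (r-1) := by
    rw [← mul_assoc, Nat.mul_div_cancel' hdvd]
  have h4 := Nat.eq_of_mul_eq_mul_left hr (h1.trans h3.symm)
  rw [h4]
  ring

theorem baranyai (hr : 0 < r) (hn : 0 < n) (hdvd : r ∣ n) :
    ∃ cl : Fin ((n-1).choose (r-1)) → Multiset (Finset (Fin n)),
      (∀ j, Multiset.card (cl j) = n / r) ∧
      (∀ j, ((cl j).map Finset.val).sum = (univ : Finset (Fin n)).val) ∧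
      (∀ S : Finset (Fin n), S.card = r → (∑ j, (cl j).count S) = 1) ∧
      (∀ j, ∀ S ∈ cl j, S.card = r) := by
  classical
  have hind : ∀ D : Finset (Fin n), ∃ cl, Inv n r D cl := by
    intro D
    induction D using Finset.induction_on with
    | empty => exact ⟨_, inv_base hr hn hdvd⟩
    | insert _ _ ha ih =>
      obtain ⟨cl, hcl⟩ := ih
      exact inv_step hr hdvd ha hcl
  obtain ⟨cl, hcl⟩ := hind univ
  have hcard : (univ : Finset (Fin n)).card = n := by simp
  have hcnt : ∀ S : Finset (Fin n), (∑ j, (cl j).count S) = cnt n r n S := by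
    intro S
    have := hcl.2.2 S (Finset.subset_univ S)
    rwa [hcard] at this
  refine ⟨cl, hcl.1, hcl.2.1, ?_, ?_⟩
  · intro S hSr
    rw [hcnt S, cnt, if_pos (le_of_eq hSr), hSr, Nat.sub_self, Nat.sub_self]
    rfl
  · intro j S hS
    have h1 : S.card ≤ r := card_le_r_of_mem hcl hS
    have h2 := count_pos_of_mem hcl hS
    rw [hcard, cnt, if_pos h1] at h2
    by_contra hc
    have h3 : 0 < r - S.card := by omega
    rw [Nat.sub_self, Nat.choose_eq_zero_of_lt h3] at h2
    omega
/-! ### Generic encoder and coordinate-sum functionals -/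

/-- encoder: entry `(row, c)` is the sum of the bits indexed by `g row c`. -/
noncomputable def enc (s m₁ m₂ : ℕ) (g : Fin m₁ → Fin m₂ → Finset (Fin s)) :
    (Fin s → ZMod 2) →ₗ[ZMod 2] Matrix (Fin m₁) (Fin m₂) (ZMod 2) where
  toFun u := Matrix.of fun row c => ∑ x ∈ g row c, u x
  map_add' u v := by
    funext row c
    simp [Matrix.add_apply, Finset.sum_add_distrib]
  map_smul' a u := by
    funext row c
    simp [Matrix.smul_apply, Finset.mul_sum, smul_eq_mul]

lemma enc_apply (s m₁ m₂ : ℕ) (g : Fin m₁ → Fin m₂ → Finset (Fin s))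
    (u : Fin s → ZMod 2) (row : Fin m₁) (c : Fin m₂) :
    enc s m₁ m₂ g u row c = ∑ x ∈ g row c, u x := rfl

/-- sum of a finite set of matrix coordinates, as a linear functional -/
noncomputable def coordSum (m₁ m₂ : ℕ) (p : Finset (Fin m₁ × Fin m₂)) :
    Matrix (Fin m₁) (Fin m₂) (ZMod 2) →ₗ[ZMod 2] ZMod 2 where
  toFun M := ∑ q ∈ p, M q.1 q.2
  map_add' M M' := by simp [Matrix.add_apply, Finset.sum_add_distrib]
  map_smul' a M := by simp [Matrix.smul_apply, Finset.mul_sum, smul_eq_mul]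

lemma coordSum_apply (m₁ m₂ : ℕ) (p : Finset (Fin m₁ × Fin m₂))
    (M : Matrix (Fin m₁) (Fin m₂) (ZMod 2)) :
    coordSum m₁ m₂ p M = ∑ q ∈ p, M q.1 q.2 := rfl

lemma coordSum_local (m₁ m₂ : ℕ) (p : Finset (Fin m₁ × Fin m₂)) (R : Finset (Fin m₂))
    (hp : ∀ q ∈ p, q.2 ∈ R) (M M' : Matrix (Fin m₁) (Fin m₂) (ZMod 2))
    (h : ∀ r : Fin m₁, ∀ c ∈ R, M r c = M' r c) :
    coordSum m₁ m₂ p M = coordSum m₁ m₂ p M' :=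
  Finset.sum_congr rfl fun q hq => h q.1 q.2 (hp q hq)

/-- block enumeration of a multiset of parts with `q` parts -/
noncomputable def blocks {n : ℕ} (q : ℕ) (cl : Multiset (Finset (Fin n)))
    (hlen : q = cl.toList.length) : Fin q → Finset (Fin n) :=
  fun row => cl.toList.get (Fin.cast hlen row)

lemma blocks_mem {n : ℕ} (q : ℕ) (cl : Multiset (Finset (Fin n)))
    (hlen : q = cl.toList.length) (row : Fin q) : blocks q cl hlen row ∈ cl := by
  rw [← Multiset.mem_toList, blocks]
  exact List.get_mem _ _

lemma exists_blocks_eq {n : ℕ} (q : ℕ) (cl : Multiset (Finset (Fin n)))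
    (hlen : q = cl.toList.length) {B : Finset (Fin n)} (hB : B ∈ cl) :
    ∃ row, blocks q cl hlen row = B := by
  obtain ⟨idx, hidx⟩ := List.mem_iff_get.1 (Multiset.mem_toList.2 hB)
  refine ⟨Fin.cast hlen.symm idx, ?_⟩
  rw [blocks, ← hidx]
  congr 1
theorem baranyai' (n r K q : ℕ) (hr : 0 < r) (hn : 0 < n) (hdvd : r ∣ n)
    (hKq : K = (n-1).choose (r-1)) (hq : q = n / r) :
    ∃ cl : Fin K → Multiset (Finset (Fin n)),
      (∀ j, Multiset.card (cl j) = q) ∧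
      (∀ j, ((cl j).map Finset.val).sum = (univ : Finset (Fin n)).val) ∧
      (∀ S : Finset (Fin n), S.card = r → (∑ j, (cl j).count S) = 1) ∧
      (∀ j, ∀ S ∈ cl j, S.card = r) := by
  subst hKq; subst hq; exact baranyai hr hn hdvd
end PIRAux

/-- For every `t ≥ 2`, `t` divides `binom(t(t+1), t+1)`, and there is a `k`-server
PIR array code with `m₁ = t` rows, `s = t(t+1)` information bits,
`m₂ = binom(t(t+1), t) + binom(t(t+1), t+1)/t` columns, and `k = binom(t(t+1), t)`. -/
theorem pir_array_code_construction (t : ℕ) (ht : 2 ≤ t) :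
    t ∣ (t * (t + 1)).choose (t + 1) ∧
    ∃ E : (Fin (t * (t + 1)) → ZMod 2) →ₗ[ZMod 2]
        Matrix (Fin t) (Fin ((t * (t + 1)).choose t + (t * (t + 1)).choose (t + 1) / t))
          (ZMod 2),
      IsPIRArrayCode t ((t * (t + 1)).choose t + (t * (t + 1)).choose (t + 1) / t)
        (t * (t + 1)) ((t * (t + 1)).choose t) E := by
  classical
  set s := t * (t + 1) with hs
  have hspos : 0 < s := by rw [hs]; positivity
  have hsge : t + 1 ≤ s := by
    rw [hs]
    calc t + 1 = 1 * (t+1) := (one_mul _).symm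
    _ ≤ t * (t + 1) := Nat.mul_le_mul_right _ (by omega)
  have hdvd' : (t+1) ∣ s := ⟨t, mul_comm t (t+1)⟩
  have hchoose : s.choose (t+1) = t * ((s-1).choose t) := by
    have h1 := PIRAux.choose_mul_eq (M := s) (k := t+1) hspos (by omega)
    rw [Nat.add_sub_cancel] at h1
    have h2 : s * ((s-1).choose t) = (t+1) * (t * ((s-1).choose t)) := by rw [hs]; ring
    rw [h2] at h1
    exact Nat.eq_of_mul_eq_mul_left (by omega) h1
  refine ⟨⟨(s-1).choose t, hchoose⟩, ?_⟩
  have hdiveq : s.choose (t+1) / t = (s-1).choose t := by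
    rw [hchoose, Nat.mul_div_cancel_left _ (by omega : 0 < t)]
  rw [hdiveq]
  set N := s.choose t with hN
  set K := (s-1).choose t with hK
  have hKpos : 0 < K := by
    rw [hK]
    exact Nat.choose_pos (by omega)
  -- Baranyai's theorem
  obtain ⟨cl, hclcard, hclsum, hclcount, hclsize⟩ :=
    PIRAux.baranyai' s (t+1) K t (by omega) hspos hdvd'
      (by rw [hK, Nat.add_sub_cancel]) (by rw [hs, Nat.mul_div_cancel _ (by omega : 0 < t+1)])
  have hlen : ∀ j : Fin K, t = (cl j).toList.length := fun j => by
    rw [Multiset.length_toList, hclcard j]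
  set bl : Fin K → Fin t → Finset (Fin s) := fun j => PIRAux.blocks t (cl j) (hlen j) with hbl
  have hblmem : ∀ j row, bl j row ∈ cl j := fun j row => PIRAux.blocks_mem t (cl j) (hlen j) row
  -- partition property: two distinct parts of one class are disjoint
  have hparts : ∀ (j : Fin K) (B B' : Finset (Fin s)), B ∈ cl j → B' ∈ cl j → B ≠ B' →
      ∀ x, x ∈ B → x ∈ B' → False := by
    intro j B B' hB hB' hne x hxB hxB'
    have h1 : cl j = B ::ₘ (cl j).erase B := (Multiset.cons_erase hB).symm
    have h2 : B' ∈ (cl j).erase B :=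
      (Multiset.mem_erase_of_ne (fun hc => hne hc.symm)).2 hB'
    have h3 : (cl j).erase B = B' ::ₘ ((cl j).erase B).erase B' := (Multiset.cons_erase h2).symm
    have hsum := hclsum j
    rw [h1, h3, Multiset.map_cons, Multiset.map_cons, Multiset.sum_cons, Multiset.sum_cons]
      at hsum
    have hcnt := congrArg (Multiset.count x) hsum
    rw [Multiset.count_add, Multiset.count_add] at hcnt
    have hx1 : 0 < Multiset.count x B.val := Multiset.count_pos.2 hxB
    have hx2 : 0 < Multiset.count x B'.val := Multiset.count_pos.2 hxB'
    have hu : Multiset.count x (univ : Finset (Fin s)).val ≤ 1 :=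
      Multiset.nodup_iff_count_le_one.1 univ.nodup x
    omega
  -- enumeration of t-subsets
  have hcardsub : Fintype.card {A : Finset (Fin s) // A.card = t} = N := by
    rw [Fintype.card_finset_len, Fintype.card_fin, hN]
  set e1 : {A : Finset (Fin s) // A.card = t} ≃ Fin N := Fintype.equivFinOfCardEq hcardsub
    with he1
  set colT : {A : Finset (Fin s) // A.card = t} → Fin (N + K) :=
    fun A => Fin.castAdd K (e1 A) with hcolT
  set colP : Fin K → Fin (N + K) := fun j => Fin.natAdd N j with hcolP
  have hcolTval : ∀ A, ((colT A : ℕ)) < N := fun A => (e1 A).isLt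
  have hcolPval : ∀ j, ((colP j : ℕ)) = N + (j : ℕ) := fun j => rfl
  have hTP : ∀ A j, colT A ≠ colP j := by
    intro A j hc
    have h1 := hcolTval A
    have h2 := hcolPval j
    rw [hc, h2] at h1
    omega
  have hTinj : Function.Injective colT := by
    intro A A' hc
    have hv := congrArg Fin.val hc
    exact e1.injective (Fin.ext hv)
  set g : Fin t → Fin (N + K) → Finset (Fin s) := fun row c =>
    if h : (c : ℕ) < N then
      {((Finset.orderIsoOfFin (e1.symm ⟨(c:ℕ), h⟩).1 (e1.symm ⟨(c:ℕ), h⟩).2 row :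
        {x // x ∈ (e1.symm ⟨(c:ℕ), h⟩).1}) : Fin s)}
    else bl ⟨(c : ℕ) - N, by have := c.isLt; omega⟩ row with hg
  have hgT : ∀ (A : {A : Finset (Fin s) // A.card = t}) (row : Fin t),
      g row (colT A) = {((Finset.orderIsoOfFin A.1 A.2 row : {x // x ∈ A.1}) : Fin s)} := by
    intro A row
    have hlt : ((colT A : ℕ)) < N := hcolTval A
    simp only [hg]
    rw [dif_pos hlt]
    have heq : e1.symm ⟨((colT A : ℕ)), hlt⟩ = A := by
      have h2 : (⟨((colT A : ℕ)), hlt⟩ : Fin N) = e1 A := by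
        apply Fin.ext
        rfl
      rw [h2, Equiv.symm_apply_apply]
    rw [heq]
  have hgP : ∀ (j : Fin K) (row : Fin t), g row (colP j) = bl j row := by
    intro j row
    have hnlt : ¬ ((colP j : ℕ)) < N := by rw [hcolPval j]; omega
    simp only [hg]
    rw [dif_neg hnlt]
    congr 1
    apply Fin.ext
    simp [hcolPval j]
  set E := PIRAux.enc s t (N + K) g with hE
  have hEapp : ∀ u row c, E u row c = ∑ x ∈ g row c, u x := fun u row c => rfl
  refine ⟨E, ?_, ?_⟩
  · -- injectivity
    intro u v huv
    funext i
    obtain ⟨A, hiA, hAcard⟩ := Finset.exists_superset_card_eq (s := {i}) (n := t)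
      (by rw [Finset.card_singleton]; omega) (by rw [Fintype.card_fin]; omega)
    have hi : i ∈ A := hiA (Finset.mem_singleton_self i)
    set row := (Finset.orderIsoOfFin A hAcard).symm ⟨i, hi⟩ with hrow
    have h1 := congrFun (congrFun huv row) (colT ⟨A, hAcard⟩)
    rw [hEapp, hEapp, hgT ⟨A, hAcard⟩ row] at h1
    rw [Finset.sum_singleton, Finset.sum_singleton, hrow] at h1
    rw [OrderIso.apply_symm_apply] at h1
    exact h1
  · -- recovery
    intro i
    -- the class containing `insert i A` and the row of that block
    have hcls0 : ∀ (A : Finset (Fin s)), A.card = t → i ∉ A →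
        ∃ jB : Fin K × Fin t, bl jB.1 jB.2 = insert i A := by
      intro A hA hiA
      have hBcard : (insert i A).card = t + 1 := by
        rw [Finset.card_insert_of_notMem hiA, hA]
      have h1 := hclcount (insert i A) hBcard
      have h2 : ∃ j, insert i A ∈ cl j := by
        by_contra hc
        push_neg at hc
        have hz : ∀ j, (cl j).count (insert i A) = 0 :=
          fun j => Multiset.count_eq_zero.2 (hc j)
        rw [Finset.sum_congr rfl fun j _ => hz j] at h1
        simp at h1
      obtain ⟨j, hj⟩ := h2
      obtain ⟨row, hrow⟩ := PIRAux.exists_blocks_eq t (cl j) (hlen j) hj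
      exact ⟨(j, row), hrow⟩
    set cls : Fin N → Fin K × Fin t := fun jj =>
      if h : i ∈ (e1.symm jj).1 then (⟨0, hKpos⟩, ⟨0, by omega⟩)
      else Classical.choose (hcls0 (e1.symm jj).1 (e1.symm jj).2 h) with hclsdef
    have hclsP : ∀ jj, (h : i ∉ (e1.symm jj).1) →
        bl (cls jj).1 (cls jj).2 = insert i (e1.symm jj).1 := by
      intro jj h
      rw [hclsdef]
      simp only [dif_neg h]
      exact Classical.choose_spec (hcls0 (e1.symm jj).1 (e1.symm jj).2 h)
    set R : Fin N → Finset (Fin (N + K)) := fun jj =>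
      if i ∈ (e1.symm jj).1 then {colT (e1.symm jj)}
      else {colT (e1.symm jj), colP (cls jj).1} with hRdef
    have hRpos : ∀ jj, i ∈ (e1.symm jj).1 → R jj = {colT (e1.symm jj)} := by
      intro jj h
      simp only [hRdef]
      rw [if_pos h]
    have hRneg : ∀ jj, i ∉ (e1.symm jj).1 →
        R jj = {colT (e1.symm jj), colP (cls jj).1} := by
      intro jj h
      simp only [hRdef]
      rw [if_neg h]
    refine ⟨R, ?_, ?_⟩
    · -- disjointness
      intro jj jj' hne
      have hAne : (e1.symm jj) ≠ (e1.symm jj') := fun hc => hne (e1.symm.injective hc)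
      have hTT : colT (e1.symm jj) ≠ colT (e1.symm jj') := fun hc => hAne (hTinj hc)
      have hPP : ∀ (h1 : i ∉ (e1.symm jj).1) (h2 : i ∉ (e1.symm jj').1),
          colP (cls jj).1 ≠ colP (cls jj').1 := by
        intro h1 h2 hc
        have hjeq : (cls jj).1 = (cls jj').1 := by
          have hv := congrArg Fin.val hc
          rw [hcolPval, hcolPval] at hv
          exact Fin.ext (by omega)
        have hb1 := hclsP jj h1
        have hb2 := hclsP jj' h2
        rw [hjeq] at hb1
        have hBne : insert i (e1.symm jj).1 ≠ insert i (e1.symm jj').1 := by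
          intro hc2
          apply hAne
          apply Subtype.ext
          have e1' : (e1.symm jj).1 = (insert i (e1.symm jj).1).erase i := by
            rw [Finset.erase_insert h1]
          have e2' : (e1.symm jj').1 = (insert i (e1.symm jj').1).erase i := by
            rw [Finset.erase_insert h2]
          rw [e1', e2', hc2]
        refine hparts (cls jj').1 (bl (cls jj').1 (cls jj).2) (bl (cls jj').1 (cls jj').2)
          (hblmem _ _) (hblmem _ _) ?_ i ?_ ?_
        · rw [hb1, hb2]
          exact hBne
        · rw [hb1]
          exact Finset.mem_insert_self i _
        · rw [hb2]
          exact Finset.mem_insert_self i _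
      rw [Finset.disjoint_left]
      intro x hx hx'
      by_cases h1 : i ∈ (e1.symm jj).1 <;> by_cases h2 : i ∈ (e1.symm jj').1
      · rw [hRpos jj h1, Finset.mem_singleton] at hx
        rw [hRpos jj' h2, Finset.mem_singleton] at hx'
        exact hTT (hx.symm.trans hx')
      · rw [hRpos jj h1, Finset.mem_singleton] at hx
        rw [hRneg jj' h2, Finset.mem_insert, Finset.mem_singleton] at hx'
        rcases hx' with hc | hc
        · exact hTT (hx.symm.trans hc)
        · exact hTP _ _ (hx.symm.trans hc)
      · rw [hRneg jj h1, Finset.mem_insert, Finset.mem_singleton] at hx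
        rw [hRpos jj' h2, Finset.mem_singleton] at hx'
        rcases hx with hc | hc
        · exact hTT (hc.symm.trans hx')
        · exact hTP _ _ (hx'.symm.trans hc)
      · rw [hRneg jj h1, Finset.mem_insert, Finset.mem_singleton] at hx
        rw [hRneg jj' h2, Finset.mem_insert, Finset.mem_singleton] at hx'
        rcases hx with hc | hc <;> rcases hx' with hc' | hc'
        · exact hTT (hc.symm.trans hc')
        · exact hTP _ _ (hc.symm.trans hc')
        · exact hTP _ _ (hc'.symm.trans hc)
        · exact hPP h1 h2 (hc.symm.trans hc')
    · -- the functionals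
      intro jj
      by_cases hi : i ∈ (e1.symm jj).1
      · refine ⟨PIRAux.coordSum t (N + K)
          {((Finset.orderIsoOfFin (e1.symm jj).1 (e1.symm jj).2).symm ⟨i, hi⟩,
            colT (e1.symm jj))}, ?_, ?_⟩
        · intro M M' hMM
          refine PIRAux.coordSum_local t (N+K) _ (R jj) ?_ M M' hMM
          intro q hq
          rw [Finset.mem_singleton] at hq
          rw [hq, hRpos jj hi]
          exact Finset.mem_singleton_self _
        · intro u
          rw [PIRAux.coordSum_apply, Finset.sum_singleton]
          rw [hEapp, hgT (e1.symm jj), Finset.sum_singleton, OrderIso.apply_symm_apply]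
      · refine ⟨PIRAux.coordSum t (N + K)
          (insert ((cls jj).2, colP (cls jj).1)
            ((univ : Finset (Fin t)).image fun row => (row, colT (e1.symm jj)))), ?_, ?_⟩
        · intro M M' hMM
          refine PIRAux.coordSum_local t (N+K) _ (R jj) ?_ M M' hMM
          intro q hq
          rw [hRneg jj hi]
          rcases Finset.mem_insert.1 hq with hc | hc
          · rw [hc]
            exact Finset.mem_insert_of_mem (Finset.mem_singleton_self _)
          · obtain ⟨row, _, hrow⟩ := Finset.mem_image.1 hc
            rw [← hrow]
            exact Finset.mem_insert_self _ _
        · intro u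
          have hnm : ((cls jj).2, colP (cls jj).1) ∉
              (univ : Finset (Fin t)).image fun row => (row, colT (e1.symm jj)) := by
            intro hc
            obtain ⟨row, _, hrow⟩ := Finset.mem_image.1 hc
            exact hTP (e1.symm jj) (cls jj).1 (by simpa using congrArg Prod.snd hrow)
          rw [PIRAux.coordSum_apply, Finset.sum_insert hnm,
            Finset.sum_image (fun a _ b _ h => (Prod.mk.injEq _ _ _ _ ▸ h).1)]
          rw [hEapp, hgP, hclsP jj hi]
          have hAsum : ∀ row : Fin t, E u row (colT (e1.symm jj))
              = u ((Finset.orderIsoOfFin (e1.symm jj).1 (e1.symm jj).2 row : _) : Fin s) := by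
            intro row
            rw [hEapp, hgT (e1.symm jj), Finset.sum_singleton]
          rw [Finset.sum_congr rfl fun row _ => hAsum row]
          have hsumA : (∑ row : Fin t,
              u ((Finset.orderIsoOfFin (e1.symm jj).1 (e1.symm jj).2 row : _) : Fin s))
              = ∑ x ∈ (e1.symm jj).1, u x := by
            rw [← Finset.sum_coe_sort ((e1.symm jj).1) u]
            exact Fintype.sum_equiv (Finset.orderIsoOfFin (e1.symm jj).1 (e1.symm jj).2).toEquiv
              _ _ (fun row => rfl)
          rw [hsumA, Finset.sum_insert hi, add_assoc, CharTwo.add_self_eq_zero, add_zero]
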